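/- Csiszár–Körner sum identity: for any jointly distributed finite random variables W and sequences S_1,...,S_n and Y_1,...,Y_n, the sum over i from 1 to n of I(S^{i-1}; Y_i | W, Y^n_{i+1}) equals the sum over i from 1 to n of I(S_i; Y^n_{i+1} | W, S^{i-1}), where S^{i-1} = (S_1,...,S_{i-1}) and Y^n_{i+1} = (Y_{i+1},...,Y_n). -/

import Mathlib

open Real BigOperators Finset Filter

section InfoTheory

variable {Ω : Type*} [Fintype Ω]

/-- `μ` is a probability mass function on the finite sample space `Ω`. -/
def IsPMF (μ : Ω → ℝ) : Prop := (∀ ω, 0 ≤ μ ω) ∧ ∑ ω, μ ω = 1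

/-- Probability that the random variable `X` takes the value `a`. -/
noncomputable def prob (μ : Ω → ℝ) {α : Type*} [DecidableEq α] (X : Ω → α) (a : α) : ℝ :=
  ∑ ω ∈ Finset.univ.filter (fun ω => X ω = a), μ ω

/-- Shannon entropy (base 2) of a finite-valued random variable. -/
noncomputable def Hent (μ : Ω → ℝ) {α : Type*} [Fintype α] [DecidableEq α] (X : Ω → α) : ℝ :=
  -∑ a : α, prob μ X a * Real.logb 2 (prob μ X a)

/-- Conditional entropy `H(X | Z)`. -/
noncomputable def Hcond (μ : Ω → ℝ) {α β : Type*} [Fintype α] [DecidableEq α]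
    [Fintype β] [DecidableEq β] (X : Ω → α) (Z : Ω → β) : ℝ :=
  Hent μ (fun ω => (X ω, Z ω)) - Hent μ Z

/-- Mutual information `I(X; Y)`. -/
noncomputable def mi (μ : Ω → ℝ) {α β : Type*} [Fintype α] [DecidableEq α]
    [Fintype β] [DecidableEq β] (X : Ω → α) (Y : Ω → β) : ℝ :=
  Hent μ X + Hent μ Y - Hent μ (fun ω => (X ω, Y ω))

/-- Conditional mutual information `I(X; Y | Z)`. -/
noncomputable def cmi (μ : Ω → ℝ) {α β γ : Type*} [Fintype α] [DecidableEq α]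
    [Fintype β] [DecidableEq β] [Fintype γ] [DecidableEq γ]
    (X : Ω → α) (Y : Ω → β) (Z : Ω → γ) : ℝ :=
  Hent μ (fun ω => (X ω, Z ω)) + Hent μ (fun ω => (Y ω, Z ω))
    - Hent μ (fun ω => (X ω, Y ω, Z ω)) - Hent μ Z

/-- Independence of two random variables. -/
def Indep (μ : Ω → ℝ) {α β : Type*} [DecidableEq α] [DecidableEq β]
    (X : Ω → α) (Y : Ω → β) : Prop :=
  ∀ a b, prob μ (fun ω => (X ω, Y ω)) (a, b) = prob μ X a * prob μ Y b

/-- Conditional independence of `X` and `Y` given `Z`. -/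
def CondIndep (μ : Ω → ℝ) {α β γ : Type*} [DecidableEq α] [DecidableEq β] [DecidableEq γ]
    (X : Ω → α) (Y : Ω → β) (Z : Ω → γ) : Prop :=
  ∀ a b c, prob μ (fun ω => (X ω, Y ω, Z ω)) (a, b, c) * prob μ Z c
    = prob μ (fun ω => (X ω, Z ω)) (a, c) * prob μ (fun ω => (Y ω, Z ω)) (b, c)

end InfoTheory

/-- Binary entropy function (base 2). -/
noncomputable def binEnt (x : ℝ) : ℝ := -(x * Real.logb 2 x) - (1 - x) * Real.logb 2 (1 - x)

/-- Binary convolution `p * q = p(1-q) + q(1-p)`. -/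
noncomputable def bconv (p q : ℝ) : ℝ := p * (1 - q) + q * (1 - p)


section CKHelpers

variable {Ω : Type*} [Fintype Ω]

lemma Hent_comp_inj' (μ : Ω → ℝ) {α β : Type*} [Fintype α] [DecidableEq α]
    [Fintype β] [DecidableEq β] (g : α → β) (hg : Function.Injective g)
    (X : Ω → α) (X' : Ω → β) (h : ∀ ω, X' ω = g (X ω)) : Hent μ X' = Hent μ X := by
  have hX' : X' = fun ω => g (X ω) := funext h
  subst hX'
  have hp : ∀ a, prob μ (fun ω => g (X ω)) (g a) = prob μ X a := by
    intro a
    unfold prob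
    apply Finset.sum_congr _ (fun _ _ => rfl)
    ext ω
    simp [hg.eq_iff]
  unfold Hent
  congr 1
  rw [← Finset.sum_subset (Finset.subset_univ (Finset.image g Finset.univ))]
  · rw [Finset.sum_image (fun a _ b _ hab => hg hab)]
    exact Finset.sum_congr rfl (fun a _ => by rw [hp])
  · intro b _ hb
    have : prob μ (fun ω => g (X ω)) b = 0 := by
      unfold prob
      rw [Finset.filter_false_of_mem, Finset.sum_empty]
      intro ω _ hc
      exact hb (Finset.mem_image.2 ⟨X ω, Finset.mem_univ _, hc⟩)
    simp [this]


end CKHelpers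

/-- Canonical entropy `H(W, S^{<a}, Y^{≥b})` used in the Csiszár–Körner telescoping. -/
noncomputable def ckF {Ω σW σS σY : Type*} [Fintype Ω]
    [Fintype σW] [DecidableEq σW] [Fintype σS] [DecidableEq σS] [Fintype σY] [DecidableEq σY]
    (μ : Ω → ℝ) (n : ℕ) (W : Ω → σW) (S : Fin n → Ω → σS) (Y : Fin n → Ω → σY)
    (a b : ℕ) : ℝ :=
  if h : a ≤ n ∧ b ≤ n then
    Hent μ (fun ω => (W ω,
      (fun j : Fin a => S ⟨j.val, by have := j.isLt; omega⟩ ω),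
      (fun j : Fin (n - b) => Y ⟨b + j.val, by have := j.isLt; omega⟩ ω)))
  else 0

section CK

variable {Ω σW σS σY : Type*} [Fintype Ω]
    [Fintype σW] [DecidableEq σW] [Fintype σS] [DecidableEq σS] [Fintype σY] [DecidableEq σY]
    (μ : Ω → ℝ) (n : ℕ) (W : Ω → σW) (S : Fin n → Ω → σS) (Y : Fin n → Ω → σY)

lemma ck_lhs (i : Fin n) :
    cmi μ (fun ω => fun j : Fin i.val => S ⟨j.val, lt_trans j.isLt i.isLt⟩ ω)
          (Y i)
          (fun ω => (W ω, fun j : Fin (n - (i.val + 1)) =>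
            Y ⟨i.val + 1 + j.val, by have := i.isLt; have := j.isLt; omega⟩ ω))
    = ckF μ n W S Y i.val (i.val + 1) + ckF μ n W S Y 0 i.val
      - ckF μ n W S Y i.val i.val - ckF μ n W S Y 0 (i.val + 1) := by
  have hi := i.isLt
  unfold cmi ckF
  rw [dif_pos (⟨by omega, by omega⟩ : i.val ≤ n ∧ i.val + 1 ≤ n),
      dif_pos (⟨by omega, by omega⟩ : 0 ≤ n ∧ i.val ≤ n),
      dif_pos (⟨by omega, by omega⟩ : i.val ≤ n ∧ i.val ≤ n),
      dif_pos (⟨by omega, by omega⟩ : 0 ≤ n ∧ i.val + 1 ≤ n)]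
  have e1 := Hent_comp_inj' μ
    (fun p : σW × (Fin i.val → σS) × (Fin (n - (i.val+1)) → σY) => (p.2.1, (p.1, p.2.2)))
    (by
      intro ⟨w1,s1,y1⟩ ⟨w2,s2,y2⟩ h
      simp only [Prod.mk.injEq] at h
      obtain ⟨hs, hw, hy⟩ := h
      rw [hw, hs, hy])
    (fun ω => (W ω,
      (fun j : Fin i.val => S ⟨j.val, by have := j.isLt; omega⟩ ω),
      (fun j : Fin (n - (i.val+1)) => Y ⟨i.val + 1 + j.val, by have := j.isLt; omega⟩ ω)))
    (fun ω => ((fun j : Fin i.val => S ⟨j.val, by have := j.isLt; omega⟩ ω),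
      (W ω, fun j : Fin (n - (i.val+1)) => Y ⟨i.val + 1 + j.val, by have := j.isLt; omega⟩ ω)))
    (fun ω => rfl)
  have e2 := Hent_comp_inj' μ
    (fun p : σW × (Fin 0 → σS) × (Fin (n - i.val) → σY) =>
      (p.2.2 ⟨0, by omega⟩, (p.1, fun j : Fin (n - (i.val+1)) =>
        p.2.2 ⟨j.val + 1, by have := j.isLt; omega⟩)))
    (by
      intro ⟨w1,s1,y1⟩ ⟨w2,s2,y2⟩ h
      simp only [Prod.mk.injEq] at h
      obtain ⟨h0, hw, ht⟩ := h
      have hs : s1 = s2 := funext fun j => j.elim0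
      have hy : y1 = y2 := by
        funext k
        obtain ⟨kv, hk⟩ := k
        cases kv with
        | zero => exact h0
        | succ m => exact congrFun ht ⟨m, by omega⟩
      rw [hw, hs, hy])
    (fun ω => (W ω,
      (fun j : Fin 0 => S ⟨j.val, by have := j.isLt; omega⟩ ω),
      (fun j : Fin (n - i.val) => Y ⟨i.val + j.val, by have := j.isLt; omega⟩ ω)))
    (fun ω => (Y i ω,
      (W ω, fun j : Fin (n - (i.val+1)) => Y ⟨i.val + 1 + j.val, by have := j.isLt; omega⟩ ω)))
    (by
      intro ω
      simp only [Prod.mk.injEq, true_and, and_true]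
      refine ⟨congrArg (fun t => Y t ω) (Fin.ext (by simp)), ?_⟩
      funext j
      exact congrArg (fun t => Y t ω) (Fin.ext (by simp; omega)))
  have e3 := Hent_comp_inj' μ
    (fun p : σW × (Fin i.val → σS) × (Fin (n - i.val) → σY) =>
      (p.2.1, p.2.2 ⟨0, by omega⟩, (p.1, fun j : Fin (n - (i.val+1)) =>
        p.2.2 ⟨j.val + 1, by have := j.isLt; omega⟩)))
    (by
      intro ⟨w1,s1,y1⟩ ⟨w2,s2,y2⟩ h
      simp only [Prod.mk.injEq] at h
      obtain ⟨hs, h0, hw, ht⟩ := h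
      have hy : y1 = y2 := by
        funext k
        obtain ⟨kv, hk⟩ := k
        cases kv with
        | zero => exact h0
        | succ m => exact congrFun ht ⟨m, by omega⟩
      rw [hw, hs, hy])
    (fun ω => (W ω,
      (fun j : Fin i.val => S ⟨j.val, by have := j.isLt; omega⟩ ω),
      (fun j : Fin (n - i.val) => Y ⟨i.val + j.val, by have := j.isLt; omega⟩ ω)))
    (fun ω => ((fun j : Fin i.val => S ⟨j.val, by have := j.isLt; omega⟩ ω), Y i ω,
      (W ω, fun j : Fin (n - (i.val+1)) => Y ⟨i.val + 1 + j.val, by have := j.isLt; omega⟩ ω)))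
    (by
      intro ω
      simp only [Prod.mk.injEq, true_and, and_true]
      refine ⟨congrArg (fun t => Y t ω) (Fin.ext (by simp)), ?_⟩
      funext j
      exact congrArg (fun t => Y t ω) (Fin.ext (by simp; omega)))
  have e4 := Hent_comp_inj' μ
    (fun p : σW × (Fin 0 → σS) × (Fin (n - (i.val+1)) → σY) => (p.1, p.2.2))
    (by
      intro ⟨w1,s1,y1⟩ ⟨w2,s2,y2⟩ h
      simp only [Prod.mk.injEq] at h
      obtain ⟨hw, hy⟩ := h
      have hs : s1 = s2 := funext fun j => j.elim0
      rw [hw, hs, hy])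
    (fun ω => (W ω,
      (fun j : Fin 0 => S ⟨j.val, by have := j.isLt; omega⟩ ω),
      (fun j : Fin (n - (i.val+1)) => Y ⟨i.val + 1 + j.val, by have := j.isLt; omega⟩ ω)))
    (fun ω => (W ω, fun j : Fin (n - (i.val+1)) =>
      Y ⟨i.val + 1 + j.val, by have := j.isLt; omega⟩ ω))
    (fun ω => rfl)
  rw [e1, e2, e3, e4]

lemma ck_rhs (i : Fin n) :
    cmi μ (S i)
          (fun ω => fun j : Fin (n - (i.val + 1)) =>
            Y ⟨i.val + 1 + j.val, by have := i.isLt; have := j.isLt; omega⟩ ω)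
          (fun ω => (W ω, fun j : Fin i.val => S ⟨j.val, lt_trans j.isLt i.isLt⟩ ω))
    = ckF μ n W S Y (i.val + 1) n + ckF μ n W S Y i.val (i.val + 1)
      - ckF μ n W S Y (i.val + 1) (i.val + 1) - ckF μ n W S Y i.val n := by
  have hi := i.isLt
  unfold cmi ckF
  rw [dif_pos (⟨by omega, by omega⟩ : i.val + 1 ≤ n ∧ n ≤ n),
      dif_pos (⟨by omega, by omega⟩ : i.val ≤ n ∧ i.val + 1 ≤ n),
      dif_pos (⟨by omega, by omega⟩ : i.val + 1 ≤ n ∧ i.val + 1 ≤ n),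
      dif_pos (⟨by omega, by omega⟩ : i.val ≤ n ∧ n ≤ n)]
  have e1 := Hent_comp_inj' μ
    (fun p : σW × (Fin (i.val+1) → σS) × (Fin (n - n) → σY) =>
      (p.2.1 ⟨i.val, by omega⟩, (p.1, fun j : Fin i.val => p.2.1 ⟨j.val, by have := j.isLt; omega⟩)))
    (by
      intro ⟨w1,s1,y1⟩ ⟨w2,s2,y2⟩ h
      simp only [Prod.mk.injEq] at h
      obtain ⟨h0, hw, ht⟩ := h
      have hy : y1 = y2 := funext fun j => absurd j.isLt (by omega)
      have hs : s1 = s2 := by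
        funext k
        obtain ⟨kv, hk⟩ := k
        rcases Nat.lt_succ_iff_lt_or_eq.mp hk with h | h
        · exact congrFun ht ⟨kv, h⟩
        · subst h; exact h0
      rw [hw, hs, hy])
    (fun ω => (W ω,
      (fun j : Fin (i.val+1) => S ⟨j.val, by have := j.isLt; omega⟩ ω),
      (fun j : Fin (n - n) => Y ⟨n + j.val, by have := j.isLt; omega⟩ ω)))
    (fun ω => (S i ω, (W ω, fun j : Fin i.val => S ⟨j.val, by have := j.isLt; omega⟩ ω)))
    (fun ω => rfl)
  have e2 := Hent_comp_inj' μ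
    (fun p : σW × (Fin i.val → σS) × (Fin (n - (i.val+1)) → σY) => (p.2.2, (p.1, p.2.1)))
    (by
      intro ⟨w1,s1,y1⟩ ⟨w2,s2,y2⟩ h
      simp only [Prod.mk.injEq] at h
      obtain ⟨hy, hw, hs⟩ := h
      rw [hw, hs, hy])
    (fun ω => (W ω,
      (fun j : Fin i.val => S ⟨j.val, by have := j.isLt; omega⟩ ω),
      (fun j : Fin (n - (i.val+1)) => Y ⟨i.val + 1 + j.val, by have := j.isLt; omega⟩ ω)))
    (fun ω => ((fun j : Fin (n - (i.val+1)) =>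
        Y ⟨i.val + 1 + j.val, by have := j.isLt; omega⟩ ω),
      (W ω, fun j : Fin i.val => S ⟨j.val, by have := j.isLt; omega⟩ ω)))
    (fun ω => rfl)
  have e3 := Hent_comp_inj' μ
    (fun p : σW × (Fin (i.val+1) → σS) × (Fin (n - (i.val+1)) → σY) =>
      (p.2.1 ⟨i.val, by omega⟩, p.2.2,
        (p.1, fun j : Fin i.val => p.2.1 ⟨j.val, by have := j.isLt; omega⟩)))
    (by
      intro ⟨w1,s1,y1⟩ ⟨w2,s2,y2⟩ h
      simp only [Prod.mk.injEq] at h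
      obtain ⟨h0, hy, hw, ht⟩ := h
      have hs : s1 = s2 := by
        funext k
        obtain ⟨kv, hk⟩ := k
        rcases Nat.lt_succ_iff_lt_or_eq.mp hk with h | h
        · exact congrFun ht ⟨kv, h⟩
        · subst h; exact h0
      rw [hw, hs, hy])
    (fun ω => (W ω,
      (fun j : Fin (i.val+1) => S ⟨j.val, by have := j.isLt; omega⟩ ω),
      (fun j : Fin (n - (i.val+1)) => Y ⟨i.val + 1 + j.val, by have := j.isLt; omega⟩ ω)))
    (fun ω => (S i ω,
      (fun j : Fin (n - (i.val+1)) => Y ⟨i.val + 1 + j.val, by have := j.isLt; omega⟩ ω),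
      (W ω, fun j : Fin i.val => S ⟨j.val, by have := j.isLt; omega⟩ ω)))
    (fun ω => rfl)
  have e4 := Hent_comp_inj' μ
    (fun p : σW × (Fin i.val → σS) × (Fin (n - n) → σY) => (p.1, p.2.1))
    (by
      intro ⟨w1,s1,y1⟩ ⟨w2,s2,y2⟩ h
      simp only [Prod.mk.injEq] at h
      obtain ⟨hw, hs⟩ := h
      have hy : y1 = y2 := funext fun j => absurd j.isLt (by omega)
      rw [hw, hs, hy])
    (fun ω => (W ω,
      (fun j : Fin i.val => S ⟨j.val, by have := j.isLt; omega⟩ ω),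
      (fun j : Fin (n - n) => Y ⟨n + j.val, by have := j.isLt; omega⟩ ω)))
    (fun ω => (W ω, fun j : Fin i.val => S ⟨j.val, by have := j.isLt; omega⟩ ω))
    (fun ω => rfl)
  rw [e1, e2, e3, e4]

end CK

/-- Csiszár–Körner sum identity. -/
theorem csiszar_korner_sum_identity {Ω σW σS σY : Type*} [Fintype Ω]
    [Fintype σW] [DecidableEq σW] [Fintype σS] [DecidableEq σS] [Fintype σY] [DecidableEq σY]
    (μ : Ω → ℝ) (hμ : IsPMF μ) (n : ℕ)
    (W : Ω → σW) (S : Fin n → Ω → σS) (Y : Fin n → Ω → σY) :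
    (∑ i : Fin n,
      cmi μ (fun ω => fun j : Fin i.val => S ⟨j.val, lt_trans j.isLt i.isLt⟩ ω)
            (Y i)
            (fun ω => (W ω, fun j : Fin (n - (i.val + 1)) =>
              Y ⟨i.val + 1 + j.val, by have := j.isLt; have := i.isLt; omega⟩ ω)))
    = ∑ i : Fin n,
      cmi μ (S i)
            (fun ω => fun j : Fin (n - (i.val + 1)) =>
              Y ⟨i.val + 1 + j.val, by have := j.isLt; have := i.isLt; omega⟩ ω)
            (fun ω => (W ω, fun j : Fin i.val => S ⟨j.val, lt_trans j.isLt i.isLt⟩ ω)) := by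
  rw [Finset.sum_congr rfl (fun i _ => ck_lhs μ n W S Y i),
      Finset.sum_congr rfl (fun i _ => ck_rhs μ n W S Y i),
      Fin.sum_univ_eq_sum_range (fun k => ckF μ n W S Y k (k + 1) + ckF μ n W S Y 0 k
        - ckF μ n W S Y k k - ckF μ n W S Y 0 (k + 1)) n,
      Fin.sum_univ_eq_sum_range (fun k => ckF μ n W S Y (k + 1) n + ckF μ n W S Y k (k + 1)
        - ckF μ n W S Y (k + 1) (k + 1) - ckF μ n W S Y k n) n,
      ← sub_eq_zero, ← Finset.sum_sub_distrib]
  have hterm : ∀ k ∈ Finset.range n,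
      (ckF μ n W S Y k (k + 1) + ckF μ n W S Y 0 k
        - ckF μ n W S Y k k - ckF μ n W S Y 0 (k + 1))
      - (ckF μ n W S Y (k + 1) n + ckF μ n W S Y k (k + 1)
        - ckF μ n W S Y (k + 1) (k + 1) - ckF μ n W S Y k n)
      = (ckF μ n W S Y 0 k - ckF μ n W S Y 0 (k + 1))
        + (ckF μ n W S Y (k + 1) (k + 1) - ckF μ n W S Y k k)
        + (ckF μ n W S Y k n - ckF μ n W S Y (k + 1) n) := by
    intro k _
    ring
  rw [Finset.sum_congr rfl hterm, Finset.sum_add_distrib, Finset.sum_add_distrib,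
      Finset.sum_range_sub' (fun k => ckF μ n W S Y 0 k) n,
      Finset.sum_range_sub (fun k => ckF μ n W S Y k k) n,
      Finset.sum_range_sub' (fun k => ckF μ n W S Y k n) n]
  ring
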